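/- Consider the binary-state structures: u₁ uniform on {(Blue,0,0), (Blue,1,1), (Red,1,0), (Red,2,1)} (player 1 signals in {0,1,2}, player 2 signals in {0,1}), and u₂ where player 1 knows the state exactly and player 2 has no information (state uniform). Then the value-based distance satisfies d(u₁,u₂) = 1/2. -/

import Mathlib

open scoped BigOperators

noncomputable section

/-- A probability distribution on a finite type, given as a nonnegative function summing to 1. -/
def IsDist {α : Type*} [Fintype α] (u : α → ℝ) : Prop :=
  (∀ a, 0 ≤ u a) ∧ ∑ a, u a = 1

/-- A garbling (stochastic map / behavioral strategy). -/
def IsKernel {α β : Type*} [Fintype β] (q : α → β → ℝ) : Prop :=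
  ∀ a, IsDist (q a)

/-- Expected payoff in the zero-sum Bayesian game `Γ(u,g)` when players use
behavioral strategies `σ` and `τ`. -/
def pay {K C D I J : Type*} [Fintype K] [Fintype C] [Fintype D] [Fintype I] [Fintype J]
    (u : K × C × D → ℝ) (g : K → I → J → ℝ) (σ : C → I → ℝ) (τ : D → J → ℝ) : ℝ :=
  ∑ k, ∑ c, ∑ d, ∑ i, ∑ j, u (k, c, d) * σ c i * τ d j * g k i j

/-- The value (maxmin) of the zero-sum Bayesian game `Γ(u,g)`, player 1 maximizing. -/
def gameVal {K C D I J : Type*} [Fintype K] [Fintype C] [Fintype D] [Fintype I] [Fintype J]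
    (u : K × C × D → ℝ) (g : K → I → J → ℝ) : ℝ :=
  sSup {x : ℝ | ∃ σ : C → I → ℝ, IsKernel σ ∧
    x = sInf {y : ℝ | ∃ τ : D → J → ℝ, IsKernel τ ∧ y = pay u g σ τ}}

/-- Garbling of player 1's signal: `(q.u)(k,c,d) = ∑ c', u(k,c',d) q(c|c')`. -/
def garbleL {K C C' D : Type*} [Fintype C] (q : C → C' → ℝ) (u : K × C × D → ℝ) :
    K × C' × D → ℝ :=
  fun x => ∑ c, u (x.1, c, x.2.2) * q c x.2.1

/-- Garbling of player 2's signal: `(u.q)(k,c,d) = ∑ d', u(k,c,d') q(d|d')`. -/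
def garbleR {K C D D' : Type*} [Fintype D] (q : D → D' → ℝ) (u : K × C × D → ℝ) :
    K × C × D' → ℝ :=
  fun x => ∑ d, u (x.1, x.2.1, d) * q d x.2.2

/-- ℓ¹ distance. -/
def l1 {α : Type*} [Fintype α] (u v : α → ℝ) : ℝ := ∑ a, |u a - v a|

/-- Payoff functions bounded by 1. -/
def Bounded1 {K I J : Type*} (g : K → I → J → ℝ) : Prop := ∀ k i j, |g k i j| ≤ 1

/-- The value-based distance: sup over all finite zero-sum games (with nonempty
finite action sets, payoffs bounded by 1) of the absolute difference of values. -/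
def valueDist {K C D C' D' : Type*} [Fintype K] [Fintype C] [Fintype D] [Fintype C'] [Fintype D']
    (u : K × C × D → ℝ) (v : K × C' × D' → ℝ) : ℝ :=
  sSup {x : ℝ | ∃ (m n : ℕ) (g : K → Fin (m + 1) → Fin (n + 1) → ℝ),
    Bounded1 g ∧ x = |gameVal u g - gameVal v g|}

/-- Value of a single-agent decision problem on a single-agent information structure. -/
def val1 {K C I : Type*} [Fintype K] [Fintype C] [Fintype I] [Nonempty I]
    (u : K × C → ℝ) (g : K → I → ℝ) : ℝ :=
  ∑ c, ⨆ i, ∑ k, u (k, c) * g k i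

/-- The single-agent value-based distance. -/
def valueDist1 {K C C' : Type*} [Fintype K] [Fintype C] [Fintype C']
    (u : K × C → ℝ) (v : K × C' → ℝ) : ℝ :=
  sSup {x : ℝ | ∃ (m : ℕ) (g : K → Fin (m + 1) → ℝ),
    (∀ k i, |g k i| ≤ 1) ∧ x = |val1 u g - val1 v g|}

/-- Garbling of the signal in a single-agent structure. -/
def garble1 {K C C' : Type*} [Fintype C] (q : C → C' → ℝ) (u : K × C → ℝ) : K × C' → ℝ :=
  fun x => ∑ c, u (x.1, c) * q c x.2

end

/-- The structure `u₁`: uniform on `{(Blue,0,0), (Blue,1,1), (Red,1,0), (Red,2,1)}`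
with `Blue = 0`, `Red = 1`. -/
noncomputable def u1ex : Fin 2 × Fin 3 × Fin 2 → ℝ := fun x =>
  if (x.1 = 0 ∧ x.2.1 = 0 ∧ x.2.2 = 0) ∨ (x.1 = 0 ∧ x.2.1 = 1 ∧ x.2.2 = 1)
      ∨ (x.1 = 1 ∧ x.2.1 = 1 ∧ x.2.2 = 0) ∨ (x.1 = 1 ∧ x.2.1 = 2 ∧ x.2.2 = 1)
  then 1 / 4 else 0

/-- The structure `u₂`: player 1 knows the uniform state, player 2 has no information. -/
noncomputable def u2ex : Fin 2 × Fin 2 × Fin 1 → ℝ := fun x =>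
  if x.2.1 = x.1 then 1 / 2 else 0
noncomputable section Aux

variable {I J : Type*} [Fintype I] [Fintype J]

/-- Atomic payoff term. -/
def Pp (g : Fin 2 → I → J → ℝ) (ρ : I → ℝ) (μ : J → ℝ) (k : Fin 2) : ℝ :=
  ∑ i, ∑ j, ρ i * μ j * g k i j

lemma abs_Pp_le {g : Fin 2 → I → J → ℝ} (hg : Bounded1 g) {ρ : I → ℝ} {μ : J → ℝ}
    (hρ : IsDist ρ) (hμ : IsDist μ) (k : Fin 2) : |Pp g ρ μ k| ≤ 1 := by
  have h1 : |Pp g ρ μ k| ≤ ∑ i, ∑ j, |ρ i * μ j * g k i j| :=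
    (Finset.abs_sum_le_sum_abs _ _).trans
      (Finset.sum_le_sum fun i _ => Finset.abs_sum_le_sum_abs _ _)
  have h2 : ∀ i j, |ρ i * μ j * g k i j| ≤ ρ i * μ j := by
    intro i j
    rw [abs_mul, abs_mul, abs_of_nonneg (hρ.1 i), abs_of_nonneg (hμ.1 j)]
    calc ρ i * μ j * |g k i j| ≤ ρ i * μ j * 1 :=
          mul_le_mul_of_nonneg_left (hg k i j) (mul_nonneg (hρ.1 i) (hμ.1 j))
      _ = ρ i * μ j := mul_one _
  calc |Pp g ρ μ k| ≤ ∑ i, ∑ j, ρ i * μ j :=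
        h1.trans (Finset.sum_le_sum fun i _ => Finset.sum_le_sum fun j _ => h2 i j)
    _ = (∑ i, ρ i) * (∑ j, μ j) := by
        rw [Finset.sum_mul]
        exact Finset.sum_congr rfl fun i _ => (Finset.mul_sum _ _ _).symm
    _ = 1 := by rw [hρ.2, hμ.2, one_mul]

lemma Pp_avg (g : Fin 2 → I → J → ℝ) (a b : I → ℝ) (μ : J → ℝ) (k : Fin 2) :
    Pp g (fun i => (a i + b i) / 2) μ k = (Pp g a μ k + Pp g b μ k) / 2 := by
  unfold Pp
  rw [← Finset.sum_add_distrib, Finset.sum_div]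
  refine Finset.sum_congr rfl fun i _ => ?_
  rw [← Finset.sum_add_distrib, Finset.sum_div]
  exact Finset.sum_congr rfl fun j _ => by ring

lemma pay_eq {C D : Type*} [Fintype C] [Fintype D] (u : Fin 2 × C × D → ℝ)
    (g : Fin 2 → I → J → ℝ) (σ : C → I → ℝ) (τ : D → J → ℝ) :
    pay u g σ τ = ∑ k, ∑ c, ∑ d, u (k, c, d) * Pp g (σ c) (τ d) k := by
  unfold pay Pp
  refine Finset.sum_congr rfl fun k _ => Finset.sum_congr rfl fun c _ =>
    Finset.sum_congr rfl fun d _ => ?_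
  rw [Finset.mul_sum]
  refine Finset.sum_congr rfl fun i _ => ?_
  rw [Finset.mul_sum]
  exact Finset.sum_congr rfl fun j _ => by ring

lemma pay_u1 (g : Fin 2 → I → J → ℝ) (σ : Fin 3 → I → ℝ) (τ : Fin 2 → J → ℝ) :
    pay u1ex g σ τ =
      (Pp g (σ 0) (τ 0) 0 + Pp g (σ 1) (τ 1) 0 + Pp g (σ 1) (τ 0) 1
        + Pp g (σ 2) (τ 1) 1) / 4 := by
  rw [pay_eq]
  simp [Fin.sum_univ_two, Fin.sum_univ_three, u1ex]
  ring

lemma pay_u2 (g : Fin 2 → I → J → ℝ) (σ : Fin 2 → I → ℝ) (τ : Fin 1 → J → ℝ) :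
    pay u2ex g σ τ = (Pp g (σ 0) (τ 0) 0 + Pp g (σ 1) (τ 0) 1) / 2 := by
  rw [pay_eq]
  simp [Fin.sum_univ_two, Fin.sum_univ_one, u2ex]
  ring

/-- uniform kernel -/
def unifK (C β : Type*) [Fintype β] [Nonempty β] : C → β → ℝ :=
  fun _ _ => (Fintype.card β : ℝ)⁻¹

lemma isKernel_unifK {C β : Type*} [Fintype β] [Nonempty β] : IsKernel (unifK C β) := by
  intro c
  constructor
  · intro b; unfold unifK; positivity
  · unfold unifK
    rw [Finset.sum_const, Finset.card_univ, nsmul_eq_mul]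
    rw [mul_inv_cancel₀]
    exact_mod_cast Fintype.card_ne_zero

end Aux
set_option linter.unusedSectionVars false

noncomputable section Aux2

variable {I J C D : Type*} [Fintype I] [Fintype J] [Fintype C] [Fintype D]

def innerSet (u : Fin 2 × C × D → ℝ) (g : Fin 2 → I → J → ℝ) (σ : C → I → ℝ) : Set ℝ :=
  {y : ℝ | ∃ τ : D → J → ℝ, IsKernel τ ∧ y = pay u g σ τ}

lemma gameVal_eq (u : Fin 2 × C × D → ℝ) (g : Fin 2 → I → J → ℝ) :
    gameVal u g = sSup {x : ℝ | ∃ σ : C → I → ℝ, IsKernel σ ∧ x = sInf (innerSet u g σ)} :=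
  rfl

variable [Nonempty I] [Nonempty J] {u : Fin 2 × C × D → ℝ} {g : Fin 2 → I → J → ℝ}

lemma inner_nonempty (σ : C → I → ℝ) : (innerSet u g σ).Nonempty :=
  ⟨_, unifK D J, isKernel_unifK, rfl⟩

lemma inner_bddBelow (hpay : ∀ σ τ, IsKernel σ → IsKernel τ → |pay u g σ τ| ≤ 1)
    {σ : C → I → ℝ} (hσ : IsKernel σ) : BddBelow (innerSet u g σ) := by
  refine ⟨-1, fun y hy => ?_⟩
  obtain ⟨τ, hτ, rfl⟩ := hy
  linarith [(abs_le.mp (hpay σ τ hσ hτ)).1]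

lemma outer_nonempty :
    {x : ℝ | ∃ σ : C → I → ℝ, IsKernel σ ∧ x = sInf (innerSet u g σ)}.Nonempty :=
  ⟨_, unifK C I, isKernel_unifK, rfl⟩

lemma outer_bddAbove (hpay : ∀ σ τ, IsKernel σ → IsKernel τ → |pay u g σ τ| ≤ 1) :
    BddAbove {x : ℝ | ∃ σ : C → I → ℝ, IsKernel σ ∧ x = sInf (innerSet u g σ)} := by
  refine ⟨1, fun x hx => ?_⟩
  obtain ⟨σ, hσ, rfl⟩ := hx
  have h1 : sInf (innerSet u g σ) ≤ pay u g σ (unifK D J) :=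
    csInf_le (inner_bddBelow hpay hσ) ⟨unifK D J, isKernel_unifK, rfl⟩
  linarith [(abs_le.mp (hpay σ (unifK D J) hσ isKernel_unifK)).2]

lemma le_gameVal (hpay : ∀ σ τ, IsKernel σ → IsKernel τ → |pay u g σ τ| ≤ 1)
    {σ : C → I → ℝ} (hσ : IsKernel σ) {b : ℝ}
    (hb : ∀ τ : D → J → ℝ, IsKernel τ → b ≤ pay u g σ τ) : b ≤ gameVal u g := by
  rw [gameVal_eq]
  have h1 : b ≤ sInf (innerSet u g σ) := by
    refine le_csInf (inner_nonempty σ) fun y hy => ?_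
    obtain ⟨τ, hτ, rfl⟩ := hy
    exact hb τ hτ
  exact h1.trans (le_csSup (outer_bddAbove hpay) ⟨σ, hσ, rfl⟩)

lemma gameVal_le (hpay : ∀ σ τ, IsKernel σ → IsKernel τ → |pay u g σ τ| ≤ 1) {b : ℝ}
    (h : ∀ σ : C → I → ℝ, IsKernel σ → ∃ τ : D → J → ℝ, IsKernel τ ∧ pay u g σ τ ≤ b) :
    gameVal u g ≤ b := by
  rw [gameVal_eq]
  refine csSup_le outer_nonempty fun x hx => ?_
  obtain ⟨σ, hσ, rfl⟩ := hx
  obtain ⟨τ, hτ, hle⟩ := h σ hσ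
  exact (csInf_le (inner_bddBelow hpay hσ) ⟨τ, hτ, rfl⟩).trans hle

end Aux2
noncomputable section Aux3

variable {I J : Type*} [Fintype I] [Fintype J] [Nonempty I] [Nonempty J]
variable {g : Fin 2 → I → J → ℝ}

lemma hpay_u1 (hg : Bounded1 g) :
    ∀ (σ : Fin 3 → I → ℝ) (τ : Fin 2 → J → ℝ),
      IsKernel σ → IsKernel τ → |pay u1ex g σ τ| ≤ 1 := by
  intro σ τ hσ hτ
  rw [pay_u1]
  have h1 := abs_le.mp (abs_Pp_le hg (hσ 0) (hτ 0) 0)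
  have h2 := abs_le.mp (abs_Pp_le hg (hσ 1) (hτ 1) 0)
  have h3 := abs_le.mp (abs_Pp_le hg (hσ 1) (hτ 0) 1)
  have h4 := abs_le.mp (abs_Pp_le hg (hσ 2) (hτ 1) 1)
  rw [abs_le]
  constructor <;> [linarith [h1.1, h2.1, h3.1, h4.1]; linarith [h1.2, h2.2, h3.2, h4.2]]

lemma hpay_u2 (hg : Bounded1 g) :
    ∀ (σ : Fin 2 → I → ℝ) (τ : Fin 1 → J → ℝ),
      IsKernel σ → IsKernel τ → |pay u2ex g σ τ| ≤ 1 := by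
  intro σ τ hσ hτ
  rw [pay_u2]
  have h1 := abs_le.mp (abs_Pp_le hg (hσ 0) (hτ 0) 0)
  have h2 := abs_le.mp (abs_Pp_le hg (hσ 1) (hτ 0) 1)
  rw [abs_le]
  constructor <;> [linarith [h1.1, h2.1]; linarith [h1.2, h2.2]]

/-- Step A: `u₂` is more valuable than `u₁` for player 1. -/
lemma gameVal_u1_le_u2 (hg : Bounded1 g) : gameVal u1ex g ≤ gameVal u2ex g := by
  rw [gameVal_eq u1ex g]
  refine csSup_le outer_nonempty fun x hx => ?_
  obtain ⟨σ₁, hσ₁, rfl⟩ := hx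
  -- garbled strategy for player 1 in u₂
  set σ₂ : Fin 2 → I → ℝ :=
    fun b i => if b = 0 then (σ₁ 0 i + σ₁ 1 i) / 2 else (σ₁ 1 i + σ₁ 2 i) / 2 with hσ₂def
  have hσ₂ : IsKernel σ₂ := by
    intro b
    constructor
    · intro i
      by_cases hb : b = 0 <;>
        simp only [hσ₂def, hb, if_true, if_false, reduceIte] <;>
        [linarith [(hσ₁ 0).1 i, (hσ₁ 1).1 i]; linarith [(hσ₁ 1).1 i, (hσ₁ 2).1 i]]
    · by_cases hb : b = 0 <;>
        simp only [hσ₂def, hb, if_true, if_false, reduceIte] <;>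
        rw [← Finset.sum_div, Finset.sum_add_distrib] <;>
        [rw [(hσ₁ 0).2, (hσ₁ 1).2]; rw [(hσ₁ 1).2, (hσ₁ 2).2]] <;> norm_num
  -- key identity
  have hident : ∀ τ₂ : Fin 1 → J → ℝ,
      pay u2ex g σ₂ τ₂ = pay u1ex g σ₁ (fun _ => τ₂ 0) := by
    intro τ₂
    rw [pay_u1, pay_u2]
    have e0 : Pp g (σ₂ 0) (τ₂ 0) 0 = (Pp g (σ₁ 0) (τ₂ 0) 0 + Pp g (σ₁ 1) (τ₂ 0) 0) / 2 := by
      have : σ₂ 0 = fun i => (σ₁ 0 i + σ₁ 1 i) / 2 := by funext i; simp [hσ₂def]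
      rw [this, Pp_avg]
    have e1 : Pp g (σ₂ 1) (τ₂ 0) 1 = (Pp g (σ₁ 1) (τ₂ 0) 1 + Pp g (σ₁ 2) (τ₂ 0) 1) / 2 := by
      have : σ₂ 1 = fun i => (σ₁ 1 i + σ₁ 2 i) / 2 := by funext i; simp [hσ₂def]
      rw [this, Pp_avg]
    rw [e0, e1]; ring
  have h1 : sInf (innerSet u1ex g σ₁) ≤ sInf (innerSet u2ex g σ₂) := by
    refine le_csInf (inner_nonempty σ₂) fun y hy => ?_
    obtain ⟨τ₂, hτ₂, rfl⟩ := hy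
    rw [hident τ₂]
    exact csInf_le (inner_bddBelow (hpay_u1 hg) hσ₁) ⟨fun _ => τ₂ 0, fun _ => hτ₂ 0, rfl⟩
  refine h1.trans ?_
  rw [gameVal_eq u2ex g]
  exact le_csSup (outer_bddAbove (hpay_u2 hg)) ⟨σ₂, hσ₂, rfl⟩

/-- Step B: the advantage of `u₂` over `u₁` is at most `1/2`. -/
lemma gameVal_u2_le_u1 (hg : Bounded1 g) : gameVal u2ex g ≤ gameVal u1ex g + 1 / 2 := by
  rw [gameVal_eq u2ex g]
  refine csSup_le outer_nonempty fun x hx => ?_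
  obtain ⟨σ₂, hσ₂, rfl⟩ := hx
  set σ₁ : Fin 3 → I → ℝ := fun c => if c = 2 then σ₂ 1 else σ₂ 0 with hσ₁def
  have hσ₁ : IsKernel σ₁ := by
    intro c
    by_cases hc : c = 2 <;> simp only [hσ₁def, hc, if_true, if_false, reduceIte] <;>
      [exact hσ₂ 1; exact hσ₂ 0]
  have key : sInf (innerSet u2ex g σ₂) ≤ sInf (innerSet u1ex g σ₁) + 1 / 2 := by
    have h2 : sInf (innerSet u2ex g σ₂) - 1 / 2 ≤ sInf (innerSet u1ex g σ₁) := by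
      refine le_csInf (inner_nonempty σ₁) fun y hy => ?_
      obtain ⟨τ₁, hτ₁, rfl⟩ := hy
      have hident : pay u1ex g σ₁ τ₁ =
          (pay u2ex g σ₂ (fun _ => τ₁ 0) + pay u2ex g σ₂ (fun _ => τ₁ 1)) / 2
            + (Pp g (σ₂ 0) (τ₁ 0) 1 - Pp g (σ₂ 1) (τ₁ 0) 1) / 4 := by
        rw [pay_u1, pay_u2, pay_u2]
        have e0 : σ₁ 0 = σ₂ 0 := by simp [hσ₁def]
        have e1 : σ₁ 1 = σ₂ 0 := by simp [hσ₁def]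
        have e2 : σ₁ 2 = σ₂ 1 := by simp [hσ₁def]
        rw [e0, e1, e2]; ring
      have ha := abs_le.mp (abs_Pp_le hg (hσ₂ 0) (hτ₁ 0) 1)
      have hb := abs_le.mp (abs_Pp_le hg (hσ₂ 1) (hτ₁ 0) 1)
      have hc : sInf (innerSet u2ex g σ₂) ≤ pay u2ex g σ₂ (fun _ => τ₁ 0) :=
        csInf_le (inner_bddBelow (hpay_u2 hg) hσ₂) ⟨fun _ => τ₁ 0, fun _ => hτ₁ 0, rfl⟩
      have hd : sInf (innerSet u2ex g σ₂) ≤ pay u2ex g σ₂ (fun _ => τ₁ 1) :=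
        csInf_le (inner_bddBelow (hpay_u2 hg) hσ₂) ⟨fun _ => τ₁ 1, fun _ => hτ₁ 1, rfl⟩
      rw [hident]
      linarith [ha.1, ha.2, hb.1, hb.2]
    linarith
  refine key.trans ?_
  have : sInf (innerSet u1ex g σ₁) ≤ gameVal u1ex g := by
    rw [gameVal_eq u1ex g]
    exact le_csSup (outer_bddAbove (hpay_u1 hg)) ⟨σ₁, hσ₁, rfl⟩
  linarith

end Aux3
noncomputable section Aux4

/-- The witness game: Blue `[[0,1],[0,-1]]`, Red `[[-1,0],[1,0]]`. -/
def gstar : Fin 2 → Fin 2 → Fin 2 → ℝ := fun k i j =>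
  if k = 0 then (if i = 0 then (if j = 0 then 0 else 1) else (if j = 0 then 0 else -1))
  else (if i = 0 then (if j = 0 then -1 else 0) else (if j = 0 then 1 else 0))

lemma bounded_gstar : Bounded1 gstar := by
  intro k i j
  fin_cases k <;> fin_cases i <;> fin_cases j <;> norm_num [gstar]

lemma Pp_gstar_zero (ρ μ : Fin 2 → ℝ) :
    Pp gstar ρ μ 0 = ρ 0 * μ 1 - ρ 1 * μ 1 := by
  simp [Pp, gstar, Fin.sum_univ_two]
  try ring

lemma Pp_gstar_one (ρ μ : Fin 2 → ℝ) :
    Pp gstar ρ μ 1 = -(ρ 0 * μ 0) + ρ 1 * μ 0 := by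
  simp [Pp, gstar, Fin.sum_univ_two]
  try ring

lemma gameVal_u2_gstar : gameVal u2ex gstar = 1 / 2 := by
  refine le_antisymm ?_ ?_
  · -- value ≤ 1/2 : respond with uniform τ
    refine gameVal_le (hpay_u2 bounded_gstar) fun σ hσ => ?_
    refine ⟨unifK (Fin 1) (Fin 2), isKernel_unifK, ?_⟩
    rw [pay_u2, Pp_gstar_zero, Pp_gstar_one]
    have hu : ∀ j : Fin 2, unifK (Fin 1) (Fin 2) 0 j = 1 / 2 := by
      intro j; norm_num [unifK]
    rw [hu 0, hu 1]
    have h0 := (hσ 0).1 0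
    have h1 := (hσ 0).1 1
    have h2 := (hσ 1).1 0
    have h3 := (hσ 1).1 1
    have hs0 : σ 0 0 + σ 0 1 = 1 := by
      have := (hσ 0).2; rwa [Fin.sum_univ_two] at this
    have hs1 : σ 1 0 + σ 1 1 = 1 := by
      have := (hσ 1).2; rwa [Fin.sum_univ_two] at this
    nlinarith
  · -- value ≥ 1/2 : play the state-revealing strategy
    set σ : Fin 2 → Fin 2 → ℝ := fun b i => if i = b then 1 else 0 with hσdef
    have hσ : IsKernel σ := by
      intro b
      constructor
      · intro i; by_cases h : i = b <;> simp [hσdef, h]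
      · fin_cases b <;> simp only [hσdef, Fin.sum_univ_two] <;> norm_num [Fin.ext_iff]
    refine le_gameVal (hpay_u2 bounded_gstar) hσ fun τ hτ => ?_
    rw [pay_u2, Pp_gstar_zero, Pp_gstar_one]
    have e : σ 0 0 = 1 ∧ σ 0 1 = 0 ∧ σ 1 0 = 0 ∧ σ 1 1 = 1 := by
      refine ⟨?_, ?_, ?_, ?_⟩ <;> simp [hσdef]
    obtain ⟨e1, e2, e3, e4⟩ := e
    rw [e1, e2, e3, e4]
    have hs : τ 0 0 + τ 0 1 = 1 := by
      have := (hτ 0).2; rwa [Fin.sum_univ_two] at this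
    linarith

lemma gameVal_u1_gstar : gameVal u1ex gstar = 0 := by
  refine le_antisymm ?_ ?_
  · -- value ≤ 0 : respond with τ d = column d
    refine gameVal_le (hpay_u1 bounded_gstar) fun σ hσ => ?_
    set τ : Fin 2 → Fin 2 → ℝ := fun d j => if j = d then 1 else 0 with hτdef
    have hτ : IsKernel τ := by
      intro d
      constructor
      · intro j; by_cases h : j = d <;> simp [hτdef, h]
      · fin_cases d <;> simp only [hτdef, Fin.sum_univ_two] <;> norm_num [Fin.ext_iff]
    refine ⟨τ, hτ, ?_⟩
    rw [pay_u1, Pp_gstar_zero, Pp_gstar_one, Pp_gstar_zero, Pp_gstar_one]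
    have e : τ 0 0 = 1 ∧ τ 0 1 = 0 ∧ τ 1 0 = 0 ∧ τ 1 1 = 1 := by
      refine ⟨?_, ?_, ?_, ?_⟩ <;> simp [hτdef]
    obtain ⟨e1, e2, e3, e4⟩ := e
    rw [e1, e2, e3, e4]
    ring_nf
    linarith
  · -- value ≥ 0
    set σ : Fin 3 → Fin 2 → ℝ := fun c i =>
      if c = 0 then (if i = 0 then 1 else 0)
      else if c = 1 then 1 / 2 else (if i = 0 then 0 else 1) with hσdef
    have hσ : IsKernel σ := by
      intro c
      constructor
      · intro i; fin_cases c <;> fin_cases i <;> simp [hσdef]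
      · fin_cases c <;> simp only [hσdef, Fin.sum_univ_two] <;> norm_num [Fin.ext_iff]
    refine le_gameVal (hpay_u1 bounded_gstar) hσ fun τ hτ => ?_
    rw [pay_u1, Pp_gstar_zero, Pp_gstar_one, Pp_gstar_zero, Pp_gstar_one]
    have e00 : σ 0 0 = 1 := by simp [hσdef]
    have e01 : σ 0 1 = 0 := by simp [hσdef]
    have e10 : σ 1 0 = 1 / 2 := by simp [hσdef]
    have e11 : σ 1 1 = 1 / 2 := by simp [hσdef]
    have e20 : σ 2 0 = 0 := by simp [hσdef]
    have e21 : σ 2 1 = 1 := by simp [hσdef]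
    rw [e00, e01, e10, e11, e20, e21]
    have h1 := (hτ 0).1 1
    have h2 := (hτ 1).1 0
    linarith

end Aux4
theorem stmt17 : valueDist u1ex u2ex = 1 / 2 := by
  have key : ∀ (m n : ℕ) (g : Fin 2 → Fin (m + 1) → Fin (n + 1) → ℝ), Bounded1 g →
      |gameVal u1ex g - gameVal u2ex g| ≤ 1 / 2 := by
    intro m n g hg
    rw [abs_sub_le_iff]
    exact ⟨by linarith [gameVal_u1_le_u2 hg], by linarith [gameVal_u2_le_u1 hg]⟩
  have hmem : (1 / 2 : ℝ) ∈ {x : ℝ | ∃ (m n : ℕ) (g : Fin 2 → Fin (m + 1) → Fin (n + 1) → ℝ),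
      Bounded1 g ∧ x = |gameVal u1ex g - gameVal u2ex g|} := by
    refine ⟨1, 1, gstar, bounded_gstar, ?_⟩
    rw [gameVal_u1_gstar, gameVal_u2_gstar]
    norm_num
  have hbdd : ∀ x ∈ {x : ℝ | ∃ (m n : ℕ) (g : Fin 2 → Fin (m + 1) → Fin (n + 1) → ℝ),
      Bounded1 g ∧ x = |gameVal u1ex g - gameVal u2ex g|}, x ≤ 1 / 2 := by
    rintro x ⟨m, n, g, hg, rfl⟩
    exact key m n g hg
  unfold valueDist
  exact le_antisymm (csSup_le ⟨1 / 2, hmem⟩ hbdd) (le_csSup ⟨1 / 2, hbdd⟩ hmem)
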